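/- Let ρ > 0, ν ∈ ℝ with cos(πν) ≠ 0, and let r' ∈ EuclideanSpace ℝ (Fin 3) be nonzero. Then G_ν(r, r') tends to the finite value −(2ν + 1)‖r'‖/(4π cos(πν) (‖r'‖² + ρ²)) as r tends to the image point −(ρ²/‖r'‖²)·r' (through r ∉ {r', −(ρ²/‖r'‖²)·r'}). -/

import Mathlib

open Real Filter

/-- The three-dimensional Maxwell fish-eye Green's function. -/
noncomputable def fisheyeGreen (ρ ν : ℝ) (r r' : EuclideanSpace ℝ (Fin 3)) : ℝ :=
  -(1 / (4 * Real.pi * Real.cos (Real.pi * ν)))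
    * (Real.sqrt ((‖r‖ ^ 2 + ρ ^ 2) * (‖r'‖ ^ 2 + ρ ^ 2))
        / (‖r - r'‖
            * Real.sqrt (‖r‖ ^ 2 * ‖r'‖ ^ 2 + 2 * ρ ^ 2 * (inner ℝ r r' : ℝ) + ρ ^ 4)))
    * Real.sin ((ν + 1 / 2)
        * Real.arccos (-1 + 2 * ρ ^ 2 * ‖r - r'‖ ^ 2
            / ((‖r‖ ^ 2 + ρ ^ 2) * (‖r'‖ ^ 2 + ρ ^ 2))))

lemma aux_tendsto_sin_mul_div (a : ℝ) :
    Tendsto (fun θ : ℝ => Real.sin (a * θ) / θ) (nhdsWithin 0 {0}ᶜ) (nhds a) := by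
  have h : HasDerivAt (fun θ : ℝ => Real.sin (a * θ)) a 0 := by
    have := (Real.hasDerivAt_sin (a * 0)).comp 0 ((hasDerivAt_id (0:ℝ)).const_mul a)
    simpa [Function.comp_def] using this
  have := hasDerivAt_iff_tendsto_slope.mp h
  refine this.congr fun θ => ?_
  simp [slope_def_field]

lemma aux_tendsto_sin_ratio (a : ℝ) :
    Tendsto (fun θ : ℝ => Real.sin (a * θ) / Real.sin (θ / 2)) (nhdsWithin 0 {0}ᶜ)
      (nhds (2 * a)) := by
  have h2 : Tendsto (fun θ : ℝ => Real.sin (θ / 2) / θ) (nhdsWithin 0 {0}ᶜ) (nhds (1/2)) := by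
    refine (aux_tendsto_sin_mul_div (1/2)).congr fun θ => ?_
    norm_num [mul_comm]
    ring_nf
  have h := (aux_tendsto_sin_mul_div a).div h2 (by norm_num)
  have h' : Tendsto (fun θ : ℝ => Real.sin (a * θ) / θ / (Real.sin (θ / 2) / θ))
      (nhdsWithin 0 {0}ᶜ) (nhds (2 * a)) := by
    convert h using 2
    · rfl
    · rw [div_div_eq_mul_div, div_one, mul_comm]
  refine h'.congr' ?_
  filter_upwards [self_mem_nhdsWithin] with θ hθ
  exact div_div_div_cancel_right₀ (hθ : θ ≠ 0) _ _

theorem fisheye_green_finite_at_image_point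
    (ρ ν : ℝ) (hρ : 0 < ρ) (hν : Real.cos (Real.pi * ν) ≠ 0)
    (r' : EuclideanSpace ℝ (Fin 3)) (hr' : r' ≠ 0) :
    Filter.Tendsto (fun r => fisheyeGreen ρ ν r r')
      (nhdsWithin (-(ρ ^ 2 / ‖r'‖ ^ 2) • r')
        ({r', -(ρ ^ 2 / ‖r'‖ ^ 2) • r'}ᶜ : Set (EuclideanSpace ℝ (Fin 3))))
      (nhds (-(2 * ν + 1) * ‖r'‖
          / (4 * Real.pi * Real.cos (Real.pi * ν) * (‖r'‖ ^ 2 + ρ ^ 2)))) := by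
  set n := ‖r'‖ with hn_def
  have hn : 0 < n := norm_pos_iff.mpr hr'
  set r₀ : EuclideanSpace ℝ (Fin 3) := -(ρ ^ 2 / ‖r'‖ ^ 2) • r' with hr₀def
  set S : Set (EuclideanSpace ℝ (Fin 3)) := {r', r₀}ᶜ with hSdef
  set c : ℝ := -(1 / (4 * Real.pi * Real.cos (Real.pi * ν))) with hc_def
  set D : EuclideanSpace ℝ (Fin 3) → ℝ := fun r => (‖r‖ ^ 2 + ρ ^ 2) * (‖r'‖ ^ 2 + ρ ^ 2)
    with hD_def
  set Q : EuclideanSpace ℝ (Fin 3) → ℝ :=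
    fun r => ‖r‖ ^ 2 * ‖r'‖ ^ 2 + 2 * ρ ^ 2 * (inner ℝ r r' : ℝ) + ρ ^ 4 with hQ_def
  set x : EuclideanSpace ℝ (Fin 3) → ℝ :=
    fun r => -1 + 2 * ρ ^ 2 * ‖r - r'‖ ^ 2 / D r with hx_def
  have hDpos : ∀ r, 0 < D r := fun r => by
    have := hρ; positivity
  have hQD : ∀ r, D r - ρ ^ 2 * ‖r - r'‖ ^ 2 = Q r := by
    intro r
    simp only [hD_def, hQ_def]
    rw [norm_sub_sq_real]
    ring
  have hsub : ∀ r : EuclideanSpace ℝ (Fin 3), r - r₀ = r + (ρ ^ 2 / n ^ 2) • r' := by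
    intro r
    rw [hr₀def, neg_smul, sub_neg_eq_add, hn_def]
  have hQid : ∀ r, Q r = n ^ 2 * ‖r - r₀‖ ^ 2 := by
    intro r
    rw [hsub r, norm_add_sq_real, real_inner_smul_right, norm_smul]
    simp only [hQ_def]
    rw [Real.norm_eq_abs, abs_of_pos (by positivity : (0:ℝ) < ρ ^ 2 / n ^ 2)]
    have hn2 : n ^ 2 ≠ 0 := by positivity
    field_simp
    ring
  have hQpos : ∀ r, r ≠ r₀ → 0 < Q r := by
    intro r hr
    rw [hQid]
    have : r - r₀ ≠ 0 := sub_ne_zero.mpr hr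
    have : 0 < ‖r - r₀‖ := norm_pos_iff.mpr this
    positivity
  have hQnonneg : ∀ r, 0 ≤ Q r := by
    intro r; rw [hQid]; positivity
  have hxle : ∀ r, x r ≤ 1 := by
    intro r
    have h1 : ρ ^ 2 * ‖r - r'‖ ^ 2 ≤ D r := by
      have := hQnonneg r; linarith [hQD r]
    have : 2 * ρ ^ 2 * ‖r - r'‖ ^ 2 / D r ≤ 2 := by
      rw [div_le_iff₀ (hDpos r)]; nlinarith
    simp only [hx_def]; linarith
  have hxge : ∀ r, -1 ≤ x r := by
    intro r
    have : 0 ≤ 2 * ρ ^ 2 * ‖r - r'‖ ^ 2 / D r := by positivity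
    simp only [hx_def]; linarith
  -- sin of half the arccos
  have hsinhalf : ∀ r, Real.sin (Real.arccos (x r) / 2) = Real.sqrt (Q r) / Real.sqrt (D r) := by
    intro r
    rw [Real.sin_half_eq_sqrt (Real.arccos_nonneg _)
      (by linarith [Real.arccos_le_pi (x r), Real.pi_pos]),
      Real.cos_arccos (hxge r) (hxle r)]
    have : (1 - x r) / 2 = Q r / D r := by
      have hD := (hDpos r).ne'
      simp only [hx_def]
      rw [← hQD r]
      field_simp
      ring
    rw [this, Real.sqrt_div (hQnonneg r)]
  -- the pointwise rewriting of G on S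
  have hGeq : ∀ r ∈ S, fisheyeGreen ρ ν r r'
      = (c / ‖r - r'‖) * (Real.sin ((ν + 1/2) * Real.arccos (x r))
          / Real.sin (Real.arccos (x r) / 2)) := by
    intro r hr
    simp only [hSdef, Set.mem_compl_iff, Set.mem_insert_iff, Set.mem_singleton_iff,
      not_or] at hr
    obtain ⟨hrr', hrr₀⟩ := hr
    have hQr : 0 < Q r := hQpos r hrr₀
    have hrr'n : (0:ℝ) < ‖r - r'‖ := norm_pos_iff.mpr (sub_ne_zero.mpr hrr')
    have hsQ : (0:ℝ) < Real.sqrt (Q r) := Real.sqrt_pos.mpr hQr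
    have hsD : (0:ℝ) < Real.sqrt (D r) := Real.sqrt_pos.mpr (hDpos r)
    have hG : fisheyeGreen ρ ν r r' = c * (Real.sqrt (D r) / (‖r - r'‖ * Real.sqrt (Q r)))
        * Real.sin ((ν + 1 / 2) * Real.arccos (x r)) := rfl
    rw [hG, hsinhalf r]
    field_simp
  -- tendsto of arccos ∘ x
  have hxcont : ContinuousAt x r₀ := by
    apply ContinuousAt.add continuousAt_const
    exact ContinuousAt.div (by fun_prop) (by fun_prop) (hDpos r₀).ne'
  have hxr₀ : x r₀ = 1 := by
    have h0 : Q r₀ = 0 := by rw [hQid]; simp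
    have hDr : ρ ^ 2 * ‖r₀ - r'‖ ^ 2 = D r₀ := by
      have := hQD r₀; rw [h0] at this; linarith
    have : x r₀ = -1 + 2 * ρ ^ 2 * ‖r₀ - r'‖ ^ 2 / D r₀ := rfl
    rw [this, mul_assoc, hDr, mul_div_assoc, div_self (hDpos r₀).ne']
    norm_num
  have htheta : Tendsto (fun r => Real.arccos (x r)) (nhdsWithin r₀ S)
      (nhdsWithin 0 {0}ᶜ) := by
    rw [tendsto_nhdsWithin_iff]
    constructor
    · have : ContinuousAt (fun r => Real.arccos (x r)) r₀ :=
        Real.continuous_arccos.continuousAt.comp hxcont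
      have h : Tendsto (fun r => Real.arccos (x r)) (nhdsWithin r₀ S)
          (nhds (Real.arccos (x r₀))) := this.tendsto.mono_left nhdsWithin_le_nhds
      simpa [hxr₀, Real.arccos_one] using h
    · filter_upwards [self_mem_nhdsWithin] with r hr
      simp only [hSdef, Set.mem_compl_iff, Set.mem_insert_iff, Set.mem_singleton_iff,
        not_or] at hr
      have hQr : 0 < Q r := hQpos r hr.2
      have hxlt : x r < 1 := by
        have h1 : ρ ^ 2 * ‖r - r'‖ ^ 2 < D r := by linarith [hQD r]
        have : 2 * ρ ^ 2 * ‖r - r'‖ ^ 2 / D r < 2 := by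
          rw [div_lt_iff₀ (hDpos r)]; nlinarith
        simp only [hx_def]; linarith
      exact Set.mem_compl_singleton_iff.mpr (Real.arccos_pos.mpr hxlt).ne'
  have hratio : Tendsto (fun r => Real.sin ((ν + 1/2) * Real.arccos (x r))
      / Real.sin (Real.arccos (x r) / 2)) (nhdsWithin r₀ S) (nhds (2 * (ν + 1/2))) :=
    (aux_tendsto_sin_ratio (ν + 1/2)).comp htheta
  -- norm of r₀ - r'
  have hr₀r' : ‖r₀ - r'‖ = (ρ ^ 2 / n ^ 2 + 1) * n := by
    have : r₀ - r' = -((ρ ^ 2 / n ^ 2 + 1) • r') := by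
      rw [hr₀def, hn_def]; module
    rw [this, norm_neg, norm_smul, Real.norm_eq_abs,
      abs_of_pos (by positivity : (0:ℝ) < ρ ^ 2 / n ^ 2 + 1), hn_def]
  have hr₀r'pos : (0:ℝ) < ‖r₀ - r'‖ := by rw [hr₀r']; positivity
  have hcoef : Tendsto (fun r : EuclideanSpace ℝ (Fin 3) => c / ‖r - r'‖)
      (nhdsWithin r₀ S) (nhds (c / ‖r₀ - r'‖)) := by
    have h : ContinuousAt (fun r : EuclideanSpace ℝ (Fin 3) => c / ‖r - r'‖) r₀ :=
      ContinuousAt.div continuousAt_const (by fun_prop) hr₀r'pos.ne'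
    exact Tendsto.mono_left h.tendsto nhdsWithin_le_nhds
  have hmul := hcoef.mul hratio
  have hlim : c / ‖r₀ - r'‖ * (2 * (ν + 1/2))
      = -(2 * ν + 1) * ‖r'‖ / (4 * Real.pi * Real.cos (Real.pi * ν) * (‖r'‖ ^ 2 + ρ ^ 2)) := by
    rw [hr₀r', hc_def, ← hn_def]
    have hπ : Real.pi ≠ 0 := Real.pi_ne_zero
    have hnρ : n ^ 2 + ρ ^ 2 ≠ 0 := by positivity
    have hn0 : n ≠ 0 := hn.ne'
    field_simp
    ring
  rw [← hlim]
  refine hmul.congr' ?_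
  filter_upwards [self_mem_nhdsWithin] with r hr
  exact (hGeq r hr).symm
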